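/- Let A = R ◊_{σ,α} G be a crystalline graded ring with R a commutative domain and G finite, and let W = {g ∈ G : σ_g = id_R}. If Σ_{s∈G} r_s u_s lies in the center Z(A), then r_s = 0 for all s ∉ W. -/

import Mathlib

/-- A crystalline graded ring `A = D ◊_{σ,α} G` over a commutative domain `D`:
`D` embeds in `A` via `ι`, `u : G → A` with `u_e = 1`, the automorphisms
`σ : G → Aut(D)` form a group morphism (as `D` is commutative, `σ_{gh} = σ_g σ_h`),
`α : G × G → D \ {0}` satisfies `u_g r = σ_g(r) u_g`, `u_g u_h = α(g,h) u_{gh}`,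
`α(g,e) = α(e,g) = 1` and the 2-cocycle relation, and `A = ⊕_g D u_g` (the
`basis` field).  The kernel of the twist is `W = {g : σ_g = 1}`. -/
structure CrysDom (G D A : Type*) [Group G] [CommRing D] [IsDomain D] [Ring A] where
  ι : D →+* A
  inj : Function.Injective ι
  u : G → A
  σ : G →* RingAut D
  α : G → G → D
  α_ne_zero : ∀ g h : G, α g h ≠ 0
  u_one : u 1 = 1
  comm : ∀ (g : G) (r : D), u g * ι r = ι (σ g r) * u g
  mul_u : ∀ g h : G, u g * u h = ι (α g h) * u (g * h)
  α_one_left : ∀ g : G, α 1 g = 1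
  α_one_right : ∀ g : G, α g 1 = 1
  cocycle : ∀ g h t : G, α g h * α (g * h) t = σ g (α h t) * α g (h * t)
  basis : Function.Bijective (fun f : G →₀ D => f.sum fun g r => ι r * u g)

/-- Coefficients of a decomposition `Σ ι(a s) u s` are unique. -/
lemma CrysDom.coeff_injective {G D A : Type*} [Group G] [Fintype G]
    [CommRing D] [IsDomain D] [Ring A] (P : CrysDom G D A) (a b : G → D)
    (hab : (∑ s : G, P.ι (a s) * P.u s) = ∑ s : G, P.ι (b s) * P.u s) :
    a = b := by
  have key : Finsupp.equivFunOnFinite.symm a = Finsupp.equivFunOnFinite.symm b := by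
    apply P.basis.injective
    dsimp only
    rw [Finsupp.sum_fintype _ _ (fun g => by simp),
        Finsupp.sum_fintype _ _ (fun g => by simp)]
    simpa using hab
  have := congrArg (Finsupp.equivFunOnFinite) key
  simpa using this

/-- If `Σ_{s ∈ G} r_s u_s` is central in `A = D ◊_{σ,α} G` (`D` a commutative
domain, `G` finite), then `r_s = 0` for all `s ∉ W = Ker σ`. -/
theorem central_supported_on_kernel {G D A : Type*} [Group G] [Fintype G]
    [CommRing D] [IsDomain D] [Ring A] (P : CrysDom G D A) (r : G → D)
    (h : (∑ s : G, P.ι (r s) * P.u s) ∈ Subring.center A) :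
    ∀ s : G, P.σ s ≠ 1 → r s = 0 := by
  intro s hs
  obtain ⟨d, hd⟩ : ∃ d : D, P.σ s d ≠ d := by
    by_contra hc
    push_neg at hc
    exact hs (by ext x; simpa using hc x)
  have hcomm : P.ι d * (∑ t : G, P.ι (r t) * P.u t)
      = (∑ t : G, P.ι (r t) * P.u t) * P.ι d :=
    (Subring.mem_center_iff.mp h (P.ι d))
  have h1 : (∑ t : G, P.ι (d * r t) * P.u t) = ∑ t : G, P.ι (r t * P.σ t d) * P.u t := by
    calc (∑ t : G, P.ι (d * r t) * P.u t)
        = P.ι d * (∑ t : G, P.ι (r t) * P.u t) := by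
          rw [Finset.mul_sum]; congr 1; ext t; rw [map_mul, mul_assoc]
      _ = (∑ t : G, P.ι (r t) * P.u t) * P.ι d := hcomm
      _ = ∑ t : G, P.ι (r t * P.σ t d) * P.u t := by
          rw [Finset.sum_mul]; congr 1; ext t
          rw [mul_assoc, P.comm, map_mul, ← mul_assoc]
  have := congrFun (P.coeff_injective _ _ h1) s
  have hz : r s * (P.σ s d - d) = 0 := by ring_nf; linear_combination -this
  rcases mul_eq_zero.mp hz with h0 | h0
  · exact h0
  · exact absurd (sub_eq_zero.mp h0) hd
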